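/- Theorem (Delannoy-like triangles). Let e, h be nonnegative real numbers. Then the Delannoy-like triangle D(e,h) = [d̃ n k]_{n,k≥0} is totally positive, and for every n ∈ ℕ the Toeplitz matrix 𝒯(c) of the n-th row sequence c k = d̃ n k is totally positive (so each row is a Pólya frequency sequence). -/

import Mathlib

open Finset

/-- An `ℕ × ℕ` matrix of real numbers is *totally positive* if every minor
taken along strictly increasing row and column indices is nonnegative. -/
def TPReal (A : ℕ → ℕ → ℝ) : Prop :=
  ∀ r : ℕ, 1 ≤ r → ∀ ρ κ : Fin r → ℕ, StrictMono ρ → StrictMono κ →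
    0 ≤ (Matrix.of fun i j : Fin r => A (ρ i) (κ j)).det

/-- The Toeplitz matrix of a sequence: `𝒯(c) i j = c (i - j)` for `i ≥ j`
and `0` otherwise. -/
def toeplitz (c : ℕ → ℝ) : ℕ → ℕ → ℝ :=
  fun i j => if j ≤ i then c (i - j) else 0

/-- The Delannoy-like triangle `D(e,h)`:
`d̃ 0 0 = d̃ 1 0 = d̃ 1 1 = 1`, `d̃ n k = 0` unless `0 ≤ k ≤ n`, and for
`n ≥ 2` and `0 ≤ k ≤ n`,
`d̃ n k = d̃ (n-1) (k-1) + h·d̃ (n-2) (k-1) + e·d̃ (n-1) k`,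
where any term with a negative index vanishes. -/
def delannoyLike (e h : ℝ) : ℕ → ℕ → ℝ
  | 0, 0 => 1
  | 0, _ + 1 => 0
  | 1, 0 => 1
  | 1, 1 => 1
  | 1, _ + 2 => 0
  | n + 2, 0 => e * delannoyLike e h (n + 1) 0
  | n + 2, k + 1 =>
      if k + 1 ≤ n + 2 then
        delannoyLike e h (n + 1) k + h * delannoyLike e h n k +
          e * delannoyLike e h (n + 1) (k + 1)
      else 0
  termination_by n k => (k, n)

namespace DLTP

/-- right multiplication by a nonneg upper-bidiagonal matrix (column operation):
new column `j` is `d j • (col j) + s j • (col (j-1))`. -/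
def opU (d s : ℕ → ℝ) (A : ℕ → ℕ → ℝ) : ℕ → ℕ → ℝ :=
  fun i j => d j * A i j + if j = 0 then 0 else s j * A i (j - 1)

/-- prepend the row `(1,0,0,…)` on top of `A`. -/
def prep (A : ℕ → ℕ → ℝ) : ℕ → ℕ → ℝ :=
  fun n k => if n = 0 then (if k = 0 then 1 else 0) else A (n - 1) k

def TPbelow (N : ℕ) (A : ℕ → ℕ → ℝ) : Prop :=
  ∀ r : ℕ, 1 ≤ r → ∀ ρ κ : Fin r → ℕ, StrictMono ρ → StrictMono κ → (∀ i, ρ i < N) →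
    0 ≤ (Matrix.of fun i j : Fin r => A (ρ i) (κ j)).det

lemma tpreal_iff {A : ℕ → ℕ → ℝ} : TPReal A ↔ ∀ N, TPbelow N A := by
  constructor
  · intro H N r hr ρ κ hρ hκ _
    exact H r hr ρ κ hρ hκ
  · intro H r hr ρ κ hρ hκ
    refine H (ρ ⟨r - 1, by omega⟩ + 1) r hr ρ κ hρ hκ (fun i => ?_)
    have : ρ i ≤ ρ ⟨r - 1, by omega⟩ := hρ.monotone (by
      change i.1 ≤ r - 1
      omega)
    omega

lemma det_opU_nonneg (d s : ℕ → ℝ) (hd : ∀ j, 0 ≤ d j) (hs : ∀ j, 0 ≤ s j)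
    (A : ℕ → ℕ → ℝ) {r : ℕ} (ρ κ : Fin r → ℕ) (hκ : StrictMono κ)
    (hA : ∀ κ' : Fin r → ℕ, StrictMono κ' →
      0 ≤ (Matrix.of fun i j : Fin r => A (ρ i) (κ' j)).det) :
    0 ≤ (Matrix.of fun i j : Fin r => opU d s A (ρ i) (κ j)).det := by
  classical
  set coef : Fin r → Bool → ℝ :=
    fun j b => if b then (if κ j = 0 then (0:ℝ) else s (κ j)) else d (κ j) with hcoef
  set ch : Fin r → Bool → ℕ := fun j b => if b then κ j - 1 else κ j with hch
  rw [← Matrix.det_transpose]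
  have hrows : ((Matrix.of fun i j : Fin r => opU d s A (ρ i) (κ j)).transpose : Matrix (Fin r) (Fin r) ℝ)
      = fun j => ∑ b : Bool, coef j b • (fun i => A (ρ i) (ch j b)) := by
    funext j i
    simp only [Matrix.transpose_apply, Matrix.of_apply, opU, Fintype.sum_bool, hcoef, hch,
      Pi.add_apply, Pi.smul_apply, smul_eq_mul]
    by_cases h0 : κ j = 0 <;> simp [h0] <;> try ring
  have expand : ((Matrix.of fun i j : Fin r => opU d s A (ρ i) (κ j)).transpose).det
      = ∑ p : Fin r → Bool, (∏ j, coef j (p j)) *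
          (Matrix.of (fun j i : Fin r => A (ρ i) (ch j (p j)))).det := by
    have e1 : ((Matrix.of fun i j : Fin r => opU d s A (ρ i) (κ j)).transpose).det
        = Matrix.detRowAlternating
            (fun j => ∑ b : Bool, coef j b • (fun i => A (ρ i) (ch j b))) := by
      rw [← hrows]; rfl
    rw [e1]
    rw [show (Matrix.detRowAlternating : (Fin r → ℝ) [⋀^Fin r]→ₗ[ℝ] ℝ)
          (fun j => ∑ b : Bool, coef j b • (fun i => A (ρ i) (ch j b)))
        = (Matrix.detRowAlternating : (Fin r → ℝ) [⋀^Fin r]→ₗ[ℝ] ℝ).toMultilinearMap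
          (fun j => ∑ b : Bool, coef j b • (fun i => A (ρ i) (ch j b))) from rfl]
    rw [MultilinearMap.map_sum]
    refine Finset.sum_congr rfl (fun p _ => ?_)
    rw [MultilinearMap.map_smul_univ]
    rfl
  rw [expand]
  refine Finset.sum_nonneg (fun p _ => ?_)
  have hcnn : 0 ≤ ∏ j, coef j (p j) := by
    refine Finset.prod_nonneg (fun j _ => ?_)
    cases hb : p j
    · simpa [hcoef, hb] using hd (κ j)
    · simp only [hcoef, hb, if_true]
      split_ifs
      · exact le_refl _
      · exact hs _
  refine mul_nonneg hcnn ?_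
  set c : Fin r → ℕ := fun j => ch j (p j) with hc
  by_cases hinj : Function.Injective c
  · have hmono : Monotone c := by
      intro a b hab
      rcases lt_or_eq_of_le hab with hl | he
      · have h1 : c a ≤ κ a := by
          simp only [hc, hch]; split_ifs <;> omega
        have h2 : κ b - 1 ≤ c b := by
          simp only [hc, hch]; split_ifs <;> omega
        have h3 : κ a < κ b := hκ hl
        omega
      · rw [he]
    have hsm : StrictMono c := hmono.strictMono_of_injective hinj
    have : (Matrix.of (fun j i : Fin r => A (ρ i) (c j)))
        = (Matrix.of fun i j : Fin r => A (ρ i) (c j)).transpose := rfl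
    rw [this, Matrix.det_transpose]
    exact hA c hsm
  · rw [Function.not_injective_iff] at hinj
    obtain ⟨a, b, hab, hne⟩ := hinj
    have : (Matrix.of (fun j i : Fin r => A (ρ i) (c j))).det = 0 := by
      refine Matrix.det_zero_of_row_eq hne ?_
      funext i
      simp [hab]
    rw [this]

lemma tpbelow_mono {A : ℕ → ℕ → ℝ} {N M : ℕ} (hNM : N ≤ M) (hA : TPbelow M A) :
    TPbelow N A :=
  fun r hr ρ κ hρ hκ hb => hA r hr ρ κ hρ hκ (fun i => lt_of_lt_of_le (hb i) hNM)

lemma tpbelow_zero (A : ℕ → ℕ → ℝ) : TPbelow 0 A := by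
  intro r hr ρ κ _ _ hb
  exact absurd (hb ⟨0, by omega⟩) (by omega)

lemma tpbelow_opU {d s : ℕ → ℝ} (hd : ∀ j, 0 ≤ d j) (hs : ∀ j, 0 ≤ s j)
    {N : ℕ} {A : ℕ → ℕ → ℝ} (hA : TPbelow N A) : TPbelow N (opU d s A) := by
  intro r hr ρ κ hρ hκ hb
  exact det_opU_nonneg d s hd hs A ρ κ hκ (fun κ' hκ' => hA r hr ρ κ' hρ hκ' hb)

lemma tpreal_opU {d s : ℕ → ℝ} (hd : ∀ j, 0 ≤ d j) (hs : ∀ j, 0 ≤ s j)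
    {A : ℕ → ℕ → ℝ} (hA : TPReal A) : TPReal (opU d s A) := by
  rw [tpreal_iff] at hA ⊢
  exact fun N => tpbelow_opU hd hs (hA N)

lemma tpbelow_sel {σ : ℕ → ℕ} (hσ : StrictMono σ) {N : ℕ} {A : ℕ → ℕ → ℝ}
    (hA : TPbelow N A) : TPbelow N (fun i j => A i (σ j)) := by
  intro r hr ρ κ hρ hκ hb
  exact hA r hr ρ (σ ∘ κ) hρ (hσ.comp hκ) hb

lemma tpreal_sel {σ : ℕ → ℕ} (hσ : StrictMono σ) {A : ℕ → ℕ → ℝ}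
    (hA : TPReal A) : TPReal (fun i j => A i (σ j)) := by
  rw [tpreal_iff] at hA ⊢
  exact fun N => tpbelow_sel hσ (hA N)

lemma tpreal_flip {A : ℕ → ℕ → ℝ} (hA : TPReal A) :
    TPReal (fun i j => A (2 * j) (2 * i)) := by
  intro r hr ρ κ hρ hκ
  have h2ρ : StrictMono (fun i => 2 * ρ i) := fun a b hab => by
    have := hρ hab; simp only []; omega
  have h2κ : StrictMono (fun i => 2 * κ i) := fun a b hab => by
    have := hκ hab; simp only []; omega
  have h := hA r hr (fun i => 2 * κ i) (fun j => 2 * ρ j) h2κ h2ρ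
  rw [← Matrix.det_transpose] at h
  exact h

lemma tpbelow_prep {N : ℕ} {A : ℕ → ℕ → ℝ} (hA : TPbelow N A) :
    TPbelow (N + 1) (prep A) := by
  intro r hr ρ κ hρ hκ hb
  obtain ⟨r, rfl⟩ := Nat.exists_eq_succ_of_ne_zero (show r ≠ 0 by omega)
  by_cases h0 : ρ 0 = 0
  · by_cases hκ0 : κ 0 = 0
    · rw [Matrix.det_succ_row_zero]
      have hcol : ∀ j : Fin (r + 1), (Matrix.of fun i j : Fin (r+1) => prep A (ρ i) (κ j)) 0 j
          = if j = 0 then 1 else 0 := by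
        intro j
        simp only [Matrix.of_apply, prep, h0, if_true]
        by_cases hj : j = 0
        · simp [hj, hκ0]
        · have : κ 0 < κ j := hκ (by
            rcases Fin.pos_iff_ne_zero.mpr hj with h
            exact h)
          have : κ j ≠ 0 := by omega
          simp [hj, this]
      rw [Finset.sum_eq_single 0]
      · rw [hcol 0]
        simp only [if_true, Fin.val_zero, pow_zero, one_mul, eq_self_iff_true]
        rcases Nat.eq_zero_or_pos r with hr0 | hrpos
        · subst hr0
          simp [Matrix.det_fin_zero]
        · have hsub : ((Matrix.of fun i j : Fin (r+1) => prep A (ρ i) (κ j)).submatrix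
              Fin.succ (Fin.succAbove 0))
            = Matrix.of fun i j : Fin r => A (ρ i.succ - 1) (κ j.succ) := by
            funext i j
            have hne : ρ i.succ ≠ 0 := by
              have : ρ 0 < ρ i.succ := hρ (Fin.succ_pos i)
              omega
            simp [Matrix.submatrix_apply, Fin.succAbove_zero, prep, hne]
          rw [hsub]
          refine hA r hrpos (fun i => ρ i.succ - 1) (fun j => κ j.succ) ?_ ?_ ?_
          · intro a b hab
            have h1 : ρ a.succ < ρ b.succ := hρ (Fin.succ_lt_succ_iff.mpr hab)
            have h2 : ρ 0 < ρ a.succ := hρ (Fin.succ_pos a)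
            simp only []
            omega
          · intro a b hab
            exact hκ (Fin.succ_lt_succ_iff.mpr hab)
          · intro i
            have := hb i.succ
            have h2 : ρ 0 < ρ i.succ := hρ (Fin.succ_pos i)
            omega
      · intro j _ hj
        rw [hcol j]
        simp [hj]
      · intro hcontra
        exact absurd (Finset.mem_univ 0) hcontra
    · have : ∀ j : Fin (r+1), (Matrix.of fun i j : Fin (r+1) => prep A (ρ i) (κ j)) 0 j = 0 := by
        intro j
        have : κ 0 ≤ κ j := hκ.monotone (Fin.zero_le j)
        have hne : κ j ≠ 0 := by omega
        simp [prep, h0, hne]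
      rw [Matrix.det_eq_zero_of_row_eq_zero 0 this]
  · have hge : ∀ i, ρ i ≠ 0 := by
      intro i
      have : ρ 0 ≤ ρ i := hρ.monotone (Fin.zero_le i)
      omega
    have hmat : (Matrix.of fun i j : Fin (r+1) => prep A (ρ i) (κ j))
        = Matrix.of fun i j : Fin (r+1) => A (ρ i - 1) (κ j) := by
      funext i j
      simp [prep, hge i]
    rw [hmat]
    refine hA (r+1) (by omega) (fun i => ρ i - 1) κ ?_ hκ ?_
    · intro a b hab
      have h1 : ρ a < ρ b := hρ hab
      have h2 := hge a
      simp only []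
      omega
    · intro i
      have h1 := hb i
      have h2 := hge i
      omega

lemma tpreal_prep {A : ℕ → ℕ → ℝ} (hA : TPReal A) : TPReal (prep A) := by
  rw [tpreal_iff] at hA ⊢
  intro N
  cases N with
  | zero => exact tpbelow_zero _
  | succ N => exact tpbelow_prep (hA N)

def Idm : ℕ → ℕ → ℝ := fun i j => if i = j then 1 else 0

lemma tpreal_Idm : TPReal Idm := by
  intro r hr ρ κ hρ hκ
  by_cases hall : ∀ i, ρ i = κ i
  · have : (Matrix.of fun i j : Fin r => Idm (ρ i) (κ j)) = 1 := by
      funext i j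
      simp only [Matrix.of_apply, Idm, Matrix.one_apply]
      by_cases hij : i = j
      · simp [hij, hall j]
      · have : ρ i ≠ κ j := by
          intro hcon
          have : κ i = κ j := by rw [← hall i, hcon]
          exact hij (hκ.injective this)
        simp [hij, this]
    rw [this, Matrix.det_one]
    norm_num
  · push_neg at hall
    have hne : (Finset.univ.filter (fun i => ρ i ≠ κ i)).Nonempty := by
      obtain ⟨i, hi⟩ := hall
      exact ⟨i, by simp [hi]⟩
    set i₀ := (Finset.univ.filter (fun i => ρ i ≠ κ i)).min' hne with hi₀
    have hi₀mem : ρ i₀ ≠ κ i₀ := by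
      have := (Finset.univ.filter (fun i => ρ i ≠ κ i)).min'_mem hne
      simpa using this
    have hlt : ∀ j : Fin r, j < i₀ → ρ j = κ j := by
      intro j hj
      by_contra hcon
      have : i₀ ≤ j := Finset.min'_le _ j (by simp [hcon])
      omega
    rcases lt_or_gt_of_ne hi₀mem with hcase | hcase
    · rw [Matrix.det_eq_zero_of_row_eq_zero i₀]
      intro j
      simp only [Matrix.of_apply, Idm]
      rcases lt_or_ge j i₀ with hj | hj
      · have : κ j = ρ j := (hlt j hj).symm
        have h2 : ρ j < ρ i₀ := hρ hj
        have : ρ i₀ ≠ κ j := by omega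
        simp [this]
      · have : κ i₀ ≤ κ j := hκ.monotone hj
        have : ρ i₀ ≠ κ j := by omega
        simp [this]
    · rw [Matrix.det_eq_zero_of_column_eq_zero i₀]
      intro i
      simp only [Matrix.of_apply, Idm]
      rcases lt_or_ge i i₀ with hi | hi
      · have : ρ i = κ i := hlt i hi
        have h2 : κ i < κ i₀ := hκ hi
        have : ρ i ≠ κ i₀ := by omega
        simp [this]
      · have : ρ i₀ ≤ ρ i := hρ.monotone hi
        have : ρ i ≠ κ i₀ := by omega
        simp [this]

/-! ### The weighted-walk vectors -/

/-- one tick of the height-walk transfer recursion. -/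
def vstep (e h : ℝ) (v : ℕ → ℝ) : ℕ → ℝ := fun s =>
  if s = 0 then e * v 0
  else if Even s then e * v s + v (s - 1) + v (s - 2)
  else h * v (s - 1)

lemma vstep_zero (e h : ℝ) (v : ℕ → ℝ) : vstep e h v 0 = e * v 0 := by simp [vstep]

lemma vstep_even (e h : ℝ) (v : ℕ → ℝ) (j : ℕ) :
    vstep e h v (2 * j + 2) = e * v (2 * j + 2) + v (2 * j + 1) + v (2 * j) := by
  have h1 : Even (2 * j + 2) := ⟨j + 1, by ring⟩
  have h2 : 2 * j + 2 - 1 = 2 * j + 1 := by omega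
  have h3 : 2 * j + 2 - 2 = 2 * j := by omega
  simp [vstep, h1, h2, h3]

lemma vstep_odd (e h : ℝ) (v : ℕ → ℝ) (j : ℕ) :
    vstep e h v (2 * j + 1) = h * v (2 * j) := by
  have h1 : ¬ Even (2 * j + 1) := by simp [Nat.even_iff]
  have h2 : 2 * j + 1 - 1 = 2 * j := by omega
  simp [vstep, h1, h2]

/-- `stepM e h A` : multiply `A` on the right by the one-tick transfer matrix,
as two successive nonneg upper-bidiagonal column operations. -/
def stepM (e h : ℝ) (A : ℕ → ℕ → ℝ) : ℕ → ℕ → ℝ :=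
  opU (fun j => if Even j then e else 0) (fun j => if Odd j then h else 1)
    (opU (fun _ => 1) (fun j => if Odd j then 1 else 0) A)

/-- the modified first tick (stay-weight `1` instead of `e`). -/
def step1 (h : ℝ) (A : ℕ → ℕ → ℝ) : ℕ → ℕ → ℝ :=
  opU (fun j => if Even j then 1 else 0) (fun j => if Odd j then h else 1)
    (opU (fun _ => 1) (fun j => if Odd j then 1 else 0) A)

lemma stepM_apply (e h : ℝ) (A : ℕ → ℕ → ℝ) (i t : ℕ) :
    stepM e h A i t = vstep e h (A i) t := by
  have hss : t - 1 - 1 = t - 2 := by omega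
  simp only [stepM, opU, vstep, Nat.even_iff, Nat.odd_iff, hss]
  split_ifs <;> first | ring1 | contradiction | (exfalso; omega) | (subst_vars; ring1)

lemma step1_apply (h : ℝ) (A : ℕ → ℕ → ℝ) (i t : ℕ) :
    step1 h A i t = vstep 1 h (A i) t := by
  have hss : t - 1 - 1 = t - 2 := by omega
  simp only [step1, opU, vstep, Nat.even_iff, Nat.odd_iff, hss]
  split_ifs <;> first | ring1 | contradiction | (exfalso; omega) | (subst_vars; ring1)

section nonneg
variable {e h : ℝ}

lemma nn_de (he : 0 ≤ e) : ∀ j : ℕ, 0 ≤ if Even j then e else 0 := fun j => by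
  split_ifs
  · exact he
  · norm_num

lemma nn_d1 : ∀ j : ℕ, 0 ≤ if Even j then (1:ℝ) else 0 := fun j => by
  split_ifs <;> norm_num

lemma nn_sh (hh : 0 ≤ h) : ∀ j : ℕ, 0 ≤ if Odd j then h else 1 := fun j => by
  split_ifs
  · exact hh
  · norm_num

lemma nn_s1 : ∀ j : ℕ, 0 ≤ if Odd j then (1:ℝ) else 0 := fun j => by
  split_ifs <;> norm_num

lemma tpbelow_stepM (he : 0 ≤ e) (hh : 0 ≤ h) {N : ℕ} {A : ℕ → ℕ → ℝ}
    (hA : TPbelow N A) : TPbelow N (stepM e h A) :=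
  tpbelow_opU (nn_de he) (nn_sh hh) (tpbelow_opU (fun _ => zero_le_one) nn_s1 hA)

lemma tpreal_stepM (he : 0 ≤ e) (hh : 0 ≤ h) {A : ℕ → ℕ → ℝ} (hA : TPReal A) :
    TPReal (stepM e h A) :=
  tpreal_opU (nn_de he) (nn_sh hh) (tpreal_opU (fun _ => zero_le_one) nn_s1 hA)

lemma tpreal_step1 (hh : 0 ≤ h) {A : ℕ → ℕ → ℝ} (hA : TPReal A) : TPReal (step1 h A) :=
  tpreal_opU nn_d1 (nn_sh hh) (tpreal_opU (fun _ => zero_le_one) nn_s1 hA)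

end nonneg

/-- the pure walk vectors `z_n = e₀ Mⁿ`. -/
def zvec (e h : ℝ) : ℕ → ℕ → ℝ
  | 0 => fun s => if s = 0 then 1 else 0
  | n + 1 => vstep e h (zvec e h n)

/-- the modified walk vectors `w_n = e₀ M₁ Mⁿ`. -/
def wv (e h : ℝ) : ℕ → ℕ → ℝ
  | 0 => fun s => if s = 0 then 1 else if s = 1 then h else if s = 2 then 1 else 0
  | n + 1 => vstep e h (wv e h n)

/-- the stacked pure-walk matrix. -/
def Zfull (e h : ℝ) : ℕ → ℕ → ℝ := fun n s => zvec e h n s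

lemma Zfull_eq (e h : ℝ) : Zfull e h = prep (stepM e h (Zfull e h)) := by
  funext n s
  cases n with
  | zero => simp [Zfull, prep, zvec]
  | succ n =>
      simp only [prep, Nat.succ_ne_zero, if_false, Nat.add_sub_cancel]
      rw [stepM_apply]
      rfl

lemma tpreal_Zfull {e h : ℝ} (he : 0 ≤ e) (hh : 0 ≤ h) : TPReal (Zfull e h) := by
  rw [tpreal_iff]
  intro N
  induction N with
  | zero => exact tpbelow_zero _
  | succ N ih =>
      rw [Zfull_eq]
      exact tpbelow_prep (tpbelow_stepM he hh ih)

/-- `Qrow e h n` represents `M₁ Mⁿ`. -/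
def Qrow (e h : ℝ) (n : ℕ) : ℕ → ℕ → ℝ := (stepM e h)^[n] (step1 h Idm)

lemma tpreal_Qrow {e h : ℝ} (he : 0 ≤ e) (hh : 0 ≤ h) (n : ℕ) : TPReal (Qrow e h n) := by
  induction n with
  | zero => exact tpreal_step1 hh tpreal_Idm
  | succ n ih =>
      rw [Qrow, Function.iterate_succ_apply']
      exact tpreal_stepM he hh ih

lemma Qrow_succ (e h : ℝ) (n : ℕ) : Qrow e h (n + 1) = stepM e h (Qrow e h n) := by
  rw [Qrow, Function.iterate_succ_apply']; rfl

lemma Qrow_zero_row (e h : ℝ) (n : ℕ) : ∀ s, Qrow e h n 0 s = wv e h n s := by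
  induction n with
  | zero =>
      intro s
      rw [Qrow, Function.iterate_zero_apply, step1_apply]
      simp only [vstep, wv, Idm, Nat.even_iff]
      split_ifs <;> first | ring1 | contradiction | (exfalso; omega)
  | succ n ih =>
      intro s
      rw [Qrow_succ, stepM_apply]
      have hrow : (Qrow e h n 0) = wv e h n := funext ih
      rw [hrow]
      rfl

/-! ### shift invariance in the height direction -/

def ShInv (A : ℕ → ℕ → ℝ) : Prop :=
  ∀ i t, A (i + 2) t = if 2 ≤ t then A i (t - 2) else 0

lemma shinv_Idm : ShInv Idm := by
  intro i t
  simp only [Idm]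
  split_ifs <;> first | rfl | contradiction | (exfalso; omega)

lemma shinv_vstep {A : ℕ → ℕ → ℝ}
    (hA : ∀ i t, A (i + 2) t = if 2 ≤ t then A i (t - 2) else 0) (e h : ℝ) (i t : ℕ) :
    vstep e h (A (i + 2)) t = if 2 ≤ t then vstep e h (A i) (t - 2) else 0 := by
  have e1 : t - 1 - 2 = t - 2 - 1 := by omega
  have e2 : t - 2 - 2 = t - 2 - 2 := rfl
  simp only [vstep, hA, Nat.even_iff, e1]
  split_ifs <;>
    first
      | ring1
      | contradiction
      | (exfalso; omega)
      | (subst_vars; ring1)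
      | (simp_all)
      | (simp_all; ring1)

lemma shinv_stepM {A : ℕ → ℕ → ℝ} (hA : ShInv A) (e h : ℝ) :
    ShInv (stepM e h A) := by
  intro i t
  simp only [stepM_apply]
  exact shinv_vstep hA e h i t

lemma shinv_step1 {A : ℕ → ℕ → ℝ} (hA : ShInv A) (h : ℝ) :
    ShInv (step1 h A) := by
  intro i t
  simp only [step1_apply]
  exact shinv_vstep hA 1 h i t

lemma shinv_Qrow (e h : ℝ) (n : ℕ) : ShInv (Qrow e h n) := by
  induction n with
  | zero => exact shinv_step1 shinv_Idm h
  | succ n ih =>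
      rw [Qrow_succ]
      exact shinv_stepM ih e h

lemma Qrow_dilate (e h : ℝ) (n : ℕ) :
    ∀ j i, Qrow e h n (2 * j) (2 * i) = if j ≤ i then wv e h n (2 * (i - j)) else 0 := by
  intro j
  induction j with
  | zero =>
      intro i
      have h0 : (2 * 0 : ℕ) = 0 := rfl
      rw [h0, Qrow_zero_row]
      simp
  | succ j ih =>
      intro i
      have h1 : 2 * (j + 1) = 2 * j + 2 := by ring
      rw [h1, shinv_Qrow e h n (2 * j) (2 * i)]
      rcases i with _ | i
      · have : ¬ (2 ≤ 2 * 0) := by omega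
        rw [if_neg this, if_neg (by omega)]
      · have h2 : 2 ≤ 2 * (i + 1) := by omega
        rw [if_pos h2, show 2 * (i + 1) - 2 = 2 * i by omega, ih i]
        by_cases hji : j ≤ i
        · rw [if_pos hji, if_pos (by omega), show i - j = i + 1 - (j + 1) by omega]
        · rw [if_neg hji, if_neg (by omega)]

/-! ### facts about `delannoyLike` -/

lemma dl_zero (e h : ℝ) (k : ℕ) :
    delannoyLike e h 0 k = if k = 0 then 1 else 0 := by
  cases k with
  | zero => rw [delannoyLike]; simp
  | succ k => rw [delannoyLike]; simp

lemma dl_vanish (e h : ℝ) : ∀ n k, n < k → delannoyLike e h n k = 0 := by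
  intro n k hnk
  match n, k, hnk with
  | 0, k + 1, _ => rw [delannoyLike]
  | 1, k + 2, _ => rw [delannoyLike]
  | n + 2, k + 1, hnk => rw [delannoyLike, if_neg (by omega)]

lemma dl_rec0 (e h : ℝ) (n : ℕ) :
    delannoyLike e h (n + 2) 0 = e * delannoyLike e h (n + 1) 0 := by
  rw [delannoyLike]

lemma dl_rec (e h : ℝ) (n k : ℕ) :
    delannoyLike e h (n + 2) (k + 1) = delannoyLike e h (n + 1) k
      + h * delannoyLike e h n k + e * delannoyLike e h (n + 1) (k + 1) := by
  by_cases hc : k + 1 ≤ n + 2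
  · rw [delannoyLike, if_pos hc]
  · rw [delannoyLike, if_neg hc,
      dl_vanish e h (n+1) k (by omega), dl_vanish e h n k (by omega),
      dl_vanish e h (n+1) (k+1) (by omega)]
    ring

lemma dl_10 (e h : ℝ) : delannoyLike e h 1 0 = 1 := by rw [delannoyLike]
lemma dl_11 (e h : ℝ) : delannoyLike e h 1 1 = 1 := by rw [delannoyLike]
lemma dl_00 (e h : ℝ) : delannoyLike e h 0 0 = 1 := by rw [delannoyLike]

/-! ### the walk vectors compute the triangle -/

lemma wv_spec (e h : ℝ) (n : ℕ) : ∀ k,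
    wv e h n (2 * k) = delannoyLike e h (n + 1) k ∧
    wv e h n (2 * k + 1) = h * delannoyLike e h n k := by
  induction n with
  | zero =>
      intro k
      constructor
      · rcases k with _ | _ | k
        · show wv e h 0 0 = _
          rw [dl_10]; rfl
        · show wv e h 0 2 = _
          rw [dl_11]
          simp [wv]
        · rw [dl_vanish e h 1 (k + 2) (by omega)]
          simp only [wv]
          split_ifs <;> first | ring1 | contradiction | (exfalso; omega)
      · rcases k with _ | k
        · show wv e h 0 1 = _
          rw [dl_00]
          simp [wv]
        · rw [dl_vanish e h 0 (k + 1) (by omega)]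
          simp only [wv]
          split_ifs <;> first | ring1 | contradiction | (exfalso; omega)
  | succ n ih =>
      intro k
      have hstep : wv e h (n + 1) = vstep e h (wv e h n) := rfl
      constructor
      · rcases k with _ | k
        · show wv e h (n + 1) 0 = _
          rw [hstep, vstep_zero, (ih 0).1, dl_rec0]
        · have h1 : 2 * (k + 1) = 2 * k + 2 := by ring
          rw [h1, hstep, vstep_even, (ih k).2, dl_rec]
          have h2 : 2 * k + 2 = 2 * (k + 1) := by ring
          rw [h2, (ih (k + 1)).1, (ih k).1]
          ring
      · rw [hstep, vstep_odd, (ih k).1]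

lemma toeplitz_zero_eq (e h : ℝ) :
    toeplitz (fun k => delannoyLike e h 0 k) = Idm := by
  funext i j
  simp only [toeplitz, Idm, dl_zero]
  split_ifs <;> first | rfl | contradiction | (exfalso; omega)

lemma toeplitz_succ_eq (e h : ℝ) (n : ℕ) :
    toeplitz (fun k => delannoyLike e h (n + 1) k)
      = fun i j => Qrow e h n (2 * j) (2 * i) := by
  funext i j
  rw [Qrow_dilate]
  simp only [toeplitz]
  by_cases hji : j ≤ i
  · rw [if_pos hji, if_pos hji, (wv_spec e h n (i - j)).1]
  · rw [if_neg hji, if_neg hji]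
/-! ### the pure walk and the triangle -/

lemma zvec_zero0 (e h : ℝ) (n : ℕ) : zvec e h (n + 1) 0 = e * zvec e h n 0 :=
  vstep_zero e h (zvec e h n)

lemma zvec_even (e h : ℝ) (n j : ℕ) :
    zvec e h (n + 1) (2 * j + 2)
      = e * zvec e h n (2 * j + 2) + zvec e h n (2 * j + 1) + zvec e h n (2 * j) :=
  vstep_even e h (zvec e h n) j

lemma zvec_odd (e h : ℝ) (n j : ℕ) :
    zvec e h (n + 1) (2 * j + 1) = h * zvec e h n (2 * j) :=
  vstep_odd e h (zvec e h n) j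

lemma zvec_odd' (e h : ℝ) (m j : ℕ) :
    zvec e h m (2 * j + 1) = h * (if m = 0 then 0 else zvec e h (m - 1) (2 * j)) := by
  cases m with
  | zero =>
      simp only [zvec]
      rw [if_neg (by omega : ¬ (2 * j + 1 = 0))]
      simp
  | succ m =>
      rw [zvec_odd, if_neg (by omega)]
      simp

lemma zvec_vanish (e h : ℝ) : ∀ n s, 2 * n < s → zvec e h n s = 0 := by
  intro n
  induction n with
  | zero =>
      intro s hs
      simp only [zvec]
      rw [if_neg (by omega)]
  | succ n ih =>
      intro s hs
      show vstep e h (zvec e h n) s = 0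
      simp only [vstep]
      split_ifs with h1 h2
      · exfalso; omega
      · rw [ih s (by omega), ih (s - 1) (by omega), ih (s - 2) (by omega)]; ring
      · rw [ih (s - 1) (by omega)]; ring

lemma dl_zv (e h : ℝ) : ∀ m, ∀ k, delannoyLike e h m k
    = zvec e h m (2 * k) + (1 - e) * (if m = 0 then 0 else zvec e h (m - 1) (2 * k)) := by
  intro m
  induction m using Nat.twoStepInduction with
  | zero =>
      intro k
      cases k with
      | zero =>
          rw [dl_00, if_pos rfl]
          simp [zvec]
      | succ k =>
          rw [dl_vanish e h 0 (k + 1) (by omega), if_pos rfl]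
          simp only [zvec]
          rw [if_neg (by omega)]
          ring
  | one =>
      intro k
      rcases k with _ | _ | k
      · rw [dl_10, if_neg (by omega)]
        rw [show (2 * 0 : ℕ) = 0 from rfl, zvec_zero0]
        have z00 : zvec e h 0 0 = 1 := by simp [zvec]
        rw [z00]
        ring
      · rw [dl_11, if_neg (by omega)]
        rw [show (2 * 1 : ℕ) = 2 * 0 + 2 from rfl, zvec_even]
        simp only [zvec]
        norm_num
        simp [zvec]
      · rw [dl_vanish e h 1 (k + 2) (by omega), if_neg (by omega),
          zvec_vanish e h 1 (2 * (k + 2)) (by omega),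
          zvec_vanish e h 0 (2 * (k + 2)) (by omega)]
        ring
  | more m ih ih1 =>
      intro k
      cases k with
      | zero =>
          rw [dl_rec0, ih1 0]
          simp only [if_neg (show ¬ (m + 1 = 0) by omega), if_neg (show ¬ (m + 2 = 0) by omega),
            Nat.add_sub_cancel, show m + 2 - 1 = m + 1 from rfl]
          simp only [show (2 * 0 : ℕ) = 0 from rfl, zvec_zero0]
          ring
      | succ j =>
          rw [dl_rec, ih1 j, ih1 (j + 1), ih j]
          simp only [if_neg (show ¬ (m + 1 = 0) by omega), if_neg (show ¬ (m + 2 = 0) by omega),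
            Nat.add_sub_cancel, show m + 2 - 1 = m + 1 from rfl]
          have h2 : 2 * (j + 1) = 2 * j + 2 := by ring
          simp only [h2]
          simp only [zvec_even e h (m + 1) j, zvec_even e h m j, zvec_odd e h m j,
            zvec_odd' e h m j]
          ring

/-- the column operation building triples of adjacent columns of `Zfull`. -/
def Gtri (e h : ℝ) : ℕ → ℕ → ℝ :=
  opU (fun _ => 1) (fun j => if Even j then 1 else 0)
    (opU (fun _ => 1) (fun j => if Odd j then 1 else 0) (Zfull e h))

lemma tpreal_Gtri {e h : ℝ} (he : 0 ≤ e) (hh : 0 ≤ h) : TPReal (Gtri e h) :=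
  tpreal_opU (fun _ => zero_le_one) nn_d1
    (tpreal_opU (fun _ => zero_le_one) nn_s1 (tpreal_Zfull he hh))

lemma Gtri_even (e h : ℝ) (i k : ℕ) :
    Gtri e h i (2 * k) = if k = 0 then zvec e h i 0
      else zvec e h i (2 * k) + zvec e h i (2 * k - 1) + zvec e h i (2 * k - 2) := by
  cases k with
  | zero =>
      simp [Gtri, opU, Zfull]
  | succ k =>
      have h1 : 2 * (k + 1) = 2 * k + 2 := by ring
      have e3 : 2 * k + 2 - 1 = 2 * k + 1 := by omega
      have e4 : 2 * k + 2 - 2 = 2 * k := by omega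
      have e5 : 2 * k + 1 - 1 = 2 * k := by omega
      have p1 : ¬ (2 * k + 2 = 0) := by omega
      have p2 : ¬ (2 * k + 1 = 0) := by omega
      have p3 : Even (2 * k + 2) := ⟨k + 1, by ring⟩
      have p4 : Odd (2 * k + 1) := ⟨k, by ring⟩
      have p5 : ¬ Odd (2 * k + 2) := by simp [Nat.odd_iff]
      rw [if_neg (by omega : ¬ (k + 1 = 0))]
      simp only [Gtri, opU, Zfull, h1, e3, e4, e5, if_neg p1, if_neg p2, if_pos p3,
        if_pos p4, if_neg p5]
      ring

lemma dl_eq_prep (e h : ℝ) :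
    delannoyLike e h = prep (fun m k => Gtri e h m (2 * k)) := by
  funext n k
  cases n with
  | zero =>
      rw [dl_zero]
      simp [prep]
  | succ m =>
      simp only [prep, Nat.succ_ne_zero, if_false, Nat.add_sub_cancel]
      rw [Gtri_even, dl_zv e h (m + 1) k, if_neg (by omega : ¬ (m + 1 = 0)),
        show m + 1 - 1 = m from by omega]
      cases k with
      | zero =>
          rw [if_pos rfl, show (2 * 0 : ℕ) = 0 from rfl, zvec_zero0]
          ring
      | succ j =>
          rw [if_neg (by omega)]
          have h2 : 2 * (j + 1) = 2 * j + 2 := by ring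
          have e3 : 2 * (j + 1) - 1 = 2 * j + 1 := by omega
          have e4 : 2 * (j + 1) - 2 = 2 * j := by omega
          rw [e3, e4, h2, zvec_even]
          ring

lemma sm2 : StrictMono (fun k : ℕ => 2 * k) := fun a b hab => by
  simp only []
  omega

end DLTP

/-- **Theorem (Delannoy-like triangles).**  For nonnegative reals `e, h`, the
Delannoy-like triangle `D(e,h)` is totally positive, and every row of
`D(e,h)` has a totally positive Toeplitz matrix (so each row is a Pólya
frequency sequence). -/
theorem delannoyLike_totallyPositive (e h : ℝ) (he : 0 ≤ e) (hh : 0 ≤ h) :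
    TPReal (delannoyLike e h) ∧
      ∀ n, TPReal (toeplitz fun k => delannoyLike e h n k) := by
  constructor
  · rw [DLTP.dl_eq_prep e h]
    exact DLTP.tpreal_prep (DLTP.tpreal_sel DLTP.sm2 (DLTP.tpreal_Gtri he hh))
  · intro n
    cases n with
    | zero =>
        rw [DLTP.toeplitz_zero_eq]
        exact DLTP.tpreal_Idm
    | succ n =>
        rw [DLTP.toeplitz_succ_eq]
        exact DLTP.tpreal_flip (DLTP.tpreal_Qrow he hh n)
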